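/- If γ > 0 and γT + 2(αT)² > 2, then for all j ∈ {1,...,N-1} and all β ≥ 0, the stability inequality (2β(1-c_j)+γ)²(γ/T + 2α²) - (γ/T)²(1+c_j) > 0 holds, where c_j = cos(2πj/N). Hence all eigenvalues of B_closed other than λ = 0 have strictly negative real part. -/

import Mathlib

open BigOperators Finset Matrix

namespace CLSaux

noncomputable def f : ℝ →+* ℂ := (algebraMap ℝ ℂ)

theorem RH (p qr qi a b : ℝ) (hp : 0 < p) (hq : qi^2 < p^2 * qr)
    (h1 : a^2 - b^2 + p*a + qr = 0) (h2 : 2*a*b + p*b + qi = 0) : a < 0 := by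
  by_contra h
  push_neg at h
  have hqi : qi = -(2*a+p)*b := by linarith
  have hqr : qr = b^2 - a^2 - p*a := by linarith
  rw [hqi, hqr] at hq
  nlinarith [mul_nonneg (mul_nonneg h (by linarith : (0:ℝ) ≤ a + p)) (by positivity : (0:ℝ) ≤ 4*b^2 + p^2)]

theorem RHC (lam : ℂ) (n p qr qi : ℝ) (hn : 0 < n) (hp : 0 < p)
    (hq : qi^2 * n < p^2 * qr)
    (heq : lam^2 * (n:ℂ) + lam * (p:ℂ) + ((qr:ℂ) + (qi:ℂ)*Complex.I) = 0) : lam.re < 0 := by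
  have hre := congrArg Complex.re heq
  have him := congrArg Complex.im heq
  simp [Complex.add_re, Complex.add_im, Complex.mul_re, Complex.mul_im, pow_two] at hre him
  have hn' : n ≠ 0 := hn.ne'
  exact RH (p/n) (qr/n) (qi/n) lam.re lam.im (by positivity)
    (by rw [div_pow, div_pow, div_mul_div_comm, div_lt_div_iff₀ (by positivity) (by positivity)]
        nlinarith [mul_lt_mul_of_pos_right hq (by positivity : (0:ℝ) < n^2)])
    (by field_simp; linarith [hre]) (by field_simp; linarith [him])

set_option maxHeartbeats 1000000 in
theorem keyineq (α γ t β nr mr sre sim : ℝ) (hγ : 0<γ) (ht : 0<t) (hβ : 0≤β) (hα : 0≤α)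
    (hK : 2*t^2 < γ*t + 2*α^2) (hnr : 0<nr) (hmr : 0 < mr)
    (hF2 : sre ≤ -mr/2) (hF1 : sim^2 ≤ mr*(nr-mr/4)) :
    (γ*t*sim)^2 * nr < (β*mr+γ*nr)^2 * (α^2*mr - γ*t*sre) := by
  have h1 : (γ*nr)^2 ≤ (β*mr+γ*nr)^2 := by nlinarith [mul_nonneg hβ hmr.le, mul_pos hγ hnr]
  have h2 : α^2*mr + γ*t*(mr/2) ≤ α^2*mr - γ*t*sre := by nlinarith [mul_pos hγ ht]
  have h3 : (γ*t*sim)^2 * nr ≤ (γ*t)^2 * (mr*(nr-mr/4)) * nr := by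
    nlinarith [mul_le_mul_of_nonneg_right (mul_le_mul_of_nonneg_left hF1 (sq_nonneg (γ*t))) hnr.le]
  have p1 : 0 < (γ*t)^2*(mr/4)*nr := by positivity
  have k1 : (γ*t)^2*(nr-mr/4)*nr < γ^2*t^2*nr^2 := by nlinarith [p1]
  have k2 : γ^2*t^2*nr^2 < γ^2*nr^2*(α^2+γ*t/2) := by
    have := mul_lt_mul_of_pos_left (show t^2 < α^2+γ*t/2 by linarith) (show (0:ℝ) < γ^2*nr^2 by positivity)
    nlinarith [this]
  have h4 : (γ*t)^2 * (mr*(nr-mr/4)) * nr < (γ*nr)^2 * (α^2*mr + γ*t*(mr/2)) := by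
    nlinarith [mul_lt_mul_of_pos_left k1 hmr, mul_lt_mul_of_pos_left k2 hmr]
  have h5 : (0:ℝ) < α^2*mr + γ*t*(mr/2) := by positivity
  calc (γ*t*sim)^2 * nr ≤ (γ*t)^2 * (mr*(nr-mr/4)) * nr := h3
    _ < (γ*nr)^2 * (α^2*mr + γ*t*(mr/2)) := h4
    _ ≤ (β*mr+γ*nr)^2 * (α^2*mr + γ*t*(mr/2)) := by nlinarith [h1]
    _ ≤ (β*mr+γ*nr)^2 * (α^2*mr - γ*t*sre) := by nlinarith [h2, sq_nonneg (β*mr+γ*nr)]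

theorem eigvec {I : Type*} [Fintype I] [DecidableEq I] (M : Matrix I I ℂ) (lam : ℂ)
    (h : lam ∈ spectrum ℂ M) : ∃ v : I → ℂ, v ≠ 0 ∧ M *ᵥ v = lam • v := by
  rw [spectrum.mem_iff] at h
  have hdet : ((algebraMap ℂ (Matrix I I ℂ) lam) - M).det = 0 := by
    by_contra hd
    exact h ((Matrix.isUnit_iff_isUnit_det _).2 (isUnit_iff_ne_zero.2 hd))
  obtain ⟨v, hv0, hv⟩ := (Matrix.exists_mulVec_eq_zero_iff).2 hdet
  refine ⟨v, hv0, ?_⟩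
  have h1 : (algebraMap ℂ (Matrix I I ℂ) lam) *ᵥ v - M *ᵥ v = 0 := by
    rw [← sub_mulVec]; exact hv
  have h2 : (algebraMap ℂ (Matrix I I ℂ) lam) *ᵥ v = lam • v := by
    simp [Algebra.algebraMap_eq_smul_one, smul_mulVec]
  rw [h2] at h1
  exact (sub_eq_zero.1 h1).symm

theorem mapB (N : ℕ) (γ T α β : ℝ) (A : Matrix (Fin N) (Fin N) ℝ) :
    (Matrix.fromBlocks 0 A ((γ / T) • 1 - (α ^ 2) • Aᵀ) (-β • (Aᵀ * A) - γ • 1)).map (algebraMap ℝ ℂ)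
    = Matrix.fromBlocks 0 (A.map f)
        (((γ/T : ℝ) : ℂ) • 1 - ((α^2 : ℝ) : ℂ) • (A.map f)ᵀ)
        ((-(β:ℂ)) • ((A.map f)ᵀ * (A.map f)) - (γ:ℂ) • 1) := by
  ext (i|i) (j|j) <;>
    simp [Matrix.map_apply, Matrix.one_apply, Matrix.mul_apply, Matrix.transpose_apply, map_sum, f] <;>
    by_cases h : i = j <;> simp [h]

theorem starMulVec (N : ℕ) (A : Matrix (Fin N) (Fin N) ℝ) (w : Fin N → ℂ) :
    (A.map f) *ᵥ (star w) = star ((A.map f) *ᵥ w) := by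
  funext i
  simp [Matrix.mulVec, dotProduct, star_sum, star_mul', Matrix.map_apply, f,
    Complex.conj_ofReal, mul_comm]

theorem entryAy (N : ℕ) [NeZero N] (hN : N ≠ 1) (A : Matrix (Fin N) (Fin N) ℝ)
    (hA : ∀ n m : Fin N, A n m = if m = n then -1 else if m = n + 1 then 1 else 0)
    (y : Fin N → ℂ) (i : Fin N) : ((A.map f) *ᵥ y) i = y (i+1) - y i := by
  have key : ∀ j, ((f (A i j)) * y j : ℂ)
      = (if j = i+1 then y j else 0) - (if j = i then y j else 0) := by
    intro j
    by_cases h1 : j = i <;> by_cases h2 : j = i+1 <;>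
      simp [hA, h1, h2, f, hN] at *
  simp only [Matrix.mulVec, dotProduct, Matrix.map_apply]
  rw [Finset.sum_congr rfl (fun j _ => key j), Finset.sum_sub_distrib]
  simp

theorem entryAy1 (A : Matrix (Fin 1) (Fin 1) ℝ)
    (hA : ∀ n m : Fin 1, A n m = if m = n then -1 else if m = n + 1 then 1 else 0)
    (y : Fin 1 → ℂ) : (A.map f) *ᵥ y = -y := by
  funext i
  fin_cases i
  simp [Matrix.mulVec, dotProduct, Matrix.map_apply, hA, f]

theorem sfacts (N : ℕ) [NeZero N] (hN : N ≠ 1) (A : Matrix (Fin N) (Fin N) ℝ)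
    (hA : ∀ n m : Fin N, A n m = if m = n then -1 else if m = n + 1 then 1 else 0)
    (y : Fin N → ℂ) :
    ((star y) ⬝ᵥ ((A.map f) *ᵥ y)).re = -(∑ i, Complex.normSq (((A.map f) *ᵥ y) i))/2 ∧
    ((star y) ⬝ᵥ ((A.map f) *ᵥ y)).im^2 ≤ (∑ i, Complex.normSq (((A.map f) *ᵥ y) i)) *
      ((∑ i, Complex.normSq (y i)) - (∑ i, Complex.normSq (((A.map f) *ᵥ y) i))/4) := by
  set w := (A.map f) *ᵥ y with hw
  set nr := ∑ i, Complex.normSq (y i) with hnr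
  set mr := ∑ i, Complex.normSq (w i) with hmr
  set σ := ∑ i, (starRingEnd ℂ) (y i) * y (i+1) with hσ
  set s := (star y) ⬝ᵥ w with hs
  have hwy : ∀ i, w i = y (i+1) - y i := entryAy N hN A hA y
  have hshift : ∀ g : Fin N → ℂ, ∑ i, g (i+1) = ∑ i, g i := fun g => Equiv.sum_comp (Equiv.addRight (1 : Fin N)) g
  have hnc : ∀ z : ℂ, ((Complex.normSq z : ℂ)) = (starRingEnd ℂ) z * z := fun z => Complex.normSq_eq_conj_mul_self
  have hseq : s = σ - (nr:ℂ) := by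
    rw [hs, dotProduct]
    push_cast [hnr]
    simp only [Pi.star_apply, hwy, Complex.star_def]
    rw [← Finset.sum_sub_distrib]
    exact Finset.sum_congr rfl fun i _ => by rw [hnc]; ring
  have hmeq : (mr:ℂ) = 2*(nr:ℂ) - σ - star σ := by
    have hstσ : star σ = ∑ i, (starRingEnd ℂ) (y (i+1)) * y i := by
      rw [hσ, star_sum]; congr 1; funext i
      simp [star_mul', Complex.star_def]; ring
    have step : (mr:ℂ) = ∑ i, ((starRingEnd ℂ) (y (i+1)) * y (i+1)
        + (starRingEnd ℂ) (y i) * y i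
        - (starRingEnd ℂ) (y i) * y (i+1) - (starRingEnd ℂ) (y (i+1)) * y i) := by
      push_cast [hmr]
      exact Finset.sum_congr rfl fun i _ => by rw [hnc, hwy, map_sub]; ring
    rw [step]
    simp only [Finset.sum_sub_distrib, Finset.sum_add_distrib]
    rw [hshift (fun i => (starRingEnd ℂ) (y i) * y i), hstσ, hσ]
    have hnrc : ((nr:ℝ):ℂ) = ∑ i, (starRingEnd ℂ) (y i) * y i := by
      push_cast [hnr]
      exact Finset.sum_congr rfl fun i _ => hnc _
    rw [hnrc]; ring
  have hnr0 : 0 ≤ nr := Finset.sum_nonneg fun i _ => Complex.normSq_nonneg _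
  let Y : EuclideanSpace ℂ (Fin N) := WithLp.toLp 2 y
  let Z : EuclideanSpace ℂ (Fin N) := WithLp.toLp 2 (fun i => y (i+1))
  have hsumY : ∑ i, ‖y i‖^2 = nr := by
    rw [hnr]
    exact Finset.sum_congr rfl fun i _ => by rw [← Complex.sq_norm]
  have hYn : ‖Y‖^2 = nr := by
    rw [EuclideanSpace.norm_eq, Real.sq_sqrt (by positivity)]
    exact hsumY
  have hZn : ‖Z‖ = ‖Y‖ := by
    rw [EuclideanSpace.norm_eq, EuclideanSpace.norm_eq]
    congr 1
    exact Equiv.sum_comp (Equiv.addRight (1 : Fin N)) (fun i => ‖y i‖^2)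
  have hσY : σ = inner ℂ Y Z := by
    rw [hσ]
    simp [PiLp.inner_apply, RCLike.inner_apply, Y, Z, mul_comm]
  have hCSn : ‖σ‖ ≤ nr := by
    have := norm_inner_le_norm (𝕜 := ℂ) Y Z
    rw [← hσY, hZn, ← sq, hYn] at this
    exact this
  have hCS : Complex.normSq σ ≤ nr^2 := by
    rw [← Complex.sq_norm]
    exact pow_le_pow_left₀ (norm_nonneg σ) hCSn 2
  have hre := congrArg Complex.re hseq
  have him := congrArg Complex.im hseq
  have hreM := congrArg Complex.re hmeq
  simp [Complex.sub_re, Complex.sub_im, Complex.ofReal_re, Complex.ofReal_im,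
    Complex.add_re, Complex.mul_re, Complex.star_def, Complex.conj_re, Complex.conj_im] at hre him hreM
  have hσsq : Complex.normSq σ = σ.re^2 + σ.im^2 := by
    rw [Complex.normSq_apply]; ring
  constructor
  · rw [hre]; linarith
  · have hσre : σ.re = nr - mr/2 := by linarith
    rw [him]
    have hb : σ.re^2 + σ.im ^ 2 ≤ nr ^ 2 := by rw [← hσsq]; exact hCS
    rw [hσre] at hb
    nlinarith [hb]

theorem core (N : ℕ) [NeZero N] (α γ T β : ℝ) (hα : 0 ≤ α) (hγ : 0 < γ) (hT : 0 < T) (hβ : 0 ≤ β)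
    (hcond : γ * T + 2 * (α * T) ^ 2 > 2)
    (A : Matrix (Fin N) (Fin N) ℝ)
    (hA : ∀ n m : Fin N, A n m = if m = n then -1 else if m = n + 1 then 1 else 0)
    (lam : ℂ) (hlam : lam ≠ 0) (x y : Fin N → ℂ) (hy : y ≠ 0)
    (e1 : (A.map f) *ᵥ y = lam • x)
    (e2 : (((γ/T : ℝ):ℂ) • 1 - ((α^2 : ℝ):ℂ) • (A.map f)ᵀ) *ᵥ x
        + ((-(β:ℂ)) • ((A.map f)ᵀ * (A.map f)) - (γ:ℂ) • 1) *ᵥ y = lam • y) :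
    lam.re < 0 := by
  have hnc : ∀ z : ℂ, ((Complex.normSq z : ℂ)) = (starRingEnd ℂ) z * z :=
    fun z => Complex.normSq_eq_conj_mul_self
  set A' := A.map f with hA'
  set w := A' *ᵥ y with hw
  set nr := ∑ i, Complex.normSq (y i) with hnr
  set mr := ∑ i, Complex.normSq (w i) with hmr
  set s := (star y) ⬝ᵥ w with hs
  have hnC : (star y) ⬝ᵥ y = (nr:ℂ) := by
    rw [dotProduct]
    push_cast [hnr]
    exact Finset.sum_congr rfl fun i _ => by rw [hnc]; rfl
  have hmC : (star w) ⬝ᵥ w = (mr:ℂ) := by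
    rw [dotProduct]
    push_cast [hmr]
    exact Finset.sum_congr rfl fun i _ => by rw [hnc]; rfl
  have hnrpos : 0 < nr := by
    obtain ⟨i, hi⟩ : ∃ i, y i ≠ 0 := by
      by_contra h; push_neg at h; exact hy (funext h)
    exact Finset.sum_pos' (fun i _ => Complex.normSq_nonneg _)
      ⟨i, Finset.mem_univ i, Complex.normSq_pos.2 hi⟩
  have hmr0 : 0 ≤ mr := Finset.sum_nonneg fun i _ => Complex.normSq_nonneg _
  -- dot identities
  have hT1 : (star y) ⬝ᵥ (A'ᵀ *ᵥ x) = (star w) ⬝ᵥ x := by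
    rw [Matrix.dotProduct_mulVec, Matrix.vecMul_transpose, hA', starMulVec]
  have hT2 : (star y) ⬝ᵥ ((A'ᵀ * A') *ᵥ y) = (mr:ℂ) := by
    rw [← Matrix.mulVec_mulVec, Matrix.dotProduct_mulVec, Matrix.vecMul_transpose, hA',
      starMulVec]
    exact hmC
  have E : ((γ/T : ℝ):ℂ) * ((star y) ⬝ᵥ x) - ((α^2 : ℝ):ℂ) * ((star w) ⬝ᵥ x)
      + ((-(β:ℂ)) * (mr:ℂ) - (γ:ℂ) * (nr:ℂ)) = lam * (nr:ℂ) := by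
    have E0 : (star y) ⬝ᵥ ((((γ/T : ℝ):ℂ) • 1 - ((α^2 : ℝ):ℂ) • A'ᵀ) *ᵥ x
        + ((-(β:ℂ)) • (A'ᵀ * A') - (γ:ℂ) • 1) *ᵥ y) = (star y) ⬝ᵥ (lam • y) := by
      rw [e2]
    rw [dotProduct_add, Matrix.sub_mulVec, Matrix.sub_mulVec,
      Matrix.smul_mulVec, Matrix.smul_mulVec, Matrix.smul_mulVec,
      Matrix.smul_mulVec, Matrix.one_mulVec, Matrix.one_mulVec,
      dotProduct_sub, dotProduct_sub,
      dotProduct_smul, dotProduct_smul, dotProduct_smul,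
      dotProduct_smul, dotProduct_smul,
      smul_eq_mul, smul_eq_mul, smul_eq_mul, smul_eq_mul, smul_eq_mul,
      hT1, hT2, hnC] at E0
    linear_combination E0
  have d1 : lam * ((star y) ⬝ᵥ x) = s := by
    rw [hs, e1, dotProduct_smul, smul_eq_mul]
  have d2 : lam * ((star w) ⬝ᵥ x) = (mr:ℂ) := by
    rw [← hmC]
    have : (star w) ⬝ᵥ (lam • x) = lam * ((star w) ⬝ᵥ x) := by
      rw [dotProduct_smul, smul_eq_mul]
    rw [← this, ← e1]
  have heq : lam^2 * (nr:ℂ) + lam * (((β*mr + γ*nr : ℝ)):ℂ)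
      + ((((α^2*mr : ℝ)):ℂ) - (((γ/T : ℝ)):ℂ) * s) = 0 := by
    push_cast
    push_cast at E d1 d2
    linear_combination (-lam) * E + ((γ:ℂ)/(T:ℂ)) * d1 - ((α:ℂ)^2) * d2
  rcases eq_or_lt_of_le hmr0 with hmrz | hmrpos
  · -- mr = 0
    have hz : ∀ i ∈ Finset.univ, Complex.normSq (w i) = 0 :=
      (Finset.sum_eq_zero_iff_of_nonneg (fun i _ => Complex.normSq_nonneg _)).1 (hmr ▸ hmrz.symm)
    have hw0 : w = 0 := funext fun i => Complex.normSq_eq_zero.1 (hz i (Finset.mem_univ i))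
    have hs0 : s = 0 := by rw [hs, hw0, dotProduct_zero]
    rw [hs0, ← hmrz] at heq
    have hfac : lam * (nr:ℂ) * (lam + (γ:ℂ)) = 0 := by
      push_cast at heq ⊢
      linear_combination heq
    rcases mul_eq_zero.1 hfac with h1 | h2
    · rcases mul_eq_zero.1 h1 with h3 | h4
      · exact absurd h3 hlam
      · exact absurd h4 (Complex.ofReal_ne_zero.2 hnrpos.ne')
    · have : lam = -(γ:ℂ) := by linear_combination h2
      rw [this]
      simp [hγ]
  · -- mr > 0
    have hK : 2*(1/T)^2 < γ*(1/T) + 2*α^2 := by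
      rw [show γ*(1/T) = γ/T from by ring, show 2*(1/T)^2 = 2/T^2 from by ring,
        div_lt_iff₀ (by positivity : (0:ℝ) < T^2)]
      have e1 : γ / T * T = γ := div_mul_cancel₀ γ hT.ne'
      have e2 : γ / T * T * T = γ * T := by rw [e1]
      nlinarith [e2]
    have hFacts : s.re ≤ -mr/2 ∧ s.im^2 ≤ mr*(nr - mr/4) := by
      by_cases hN1 : N = 1
      · subst hN1
        have hwy : w = -y := by rw [hw, hA']; exact entryAy1 A hA y
        have hsy : s = -(nr:ℂ) := by rw [hs, hwy, dotProduct_neg, hnC]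
        have hmn : mr = nr := by
          rw [hmr, hnr, hwy]
          exact Finset.sum_congr rfl fun i _ => by simp
        have hsre : s.re = -nr := by rw [hsy]; simp
        have hsim : s.im = 0 := by rw [hsy]; simp
        constructor
        · rw [hsre, hmn]; linarith
        · rw [hsim, hmn]; nlinarith [hnrpos.le]
      · obtain ⟨F2, F1⟩ := sfacts N hN1 A hA y
        constructor
        · rw [show s.re = ((star y) ⬝ᵥ ((A.map f) *ᵥ y)).re from rfl, F2]
        · exact F1
    obtain ⟨hF2, hF1⟩ := hFacts
    have hp : 0 < β*mr + γ*nr := by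
      have := mul_nonneg hβ hmrpos.le
      have := mul_pos hγ hnrpos
      linarith
    have hkey := keyineq α γ (1/T) β nr mr s.re s.im hγ (by positivity) hβ hα hK hnrpos hmrpos hF2 hF1
    rw [show γ*(1/T) = γ/T from by ring] at hkey
    refine RHC lam nr (β*mr + γ*nr) (α^2*mr - γ/T*s.re) (-(γ/T*s.im)) hnrpos hp ?_ ?_
    · nlinarith [hkey]
    · rw [show s = (s.re:ℂ) + (s.im:ℂ)*Complex.I from (Complex.re_add_im s).symm] at heq
      push_cast at heq ⊢
      linear_combination heq

end CLSaux

open CLSaux in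
/-- If `γ > 0` and `γT + 2(αT)² > 2`, then for all `j ∈ {1,…,N-1}` and all `β ≥ 0`
the stability inequality `(2β(1-c_j)+γ)²(γ/T + 2α²) - (γ/T)²(1+c_j) > 0` holds,
with `c_j = cos(2πj/N)`; hence all eigenvalues of the closed-loop matrix `B_closed`
other than `0` have strictly negative real part. -/
theorem closedloop_sufficient_stability (N : ℕ) [NeZero N] (α γ T : ℝ)
    (hα : 0 ≤ α) (hγ : 0 < γ) (hT : 0 < T)
    (hcond : γ * T + 2 * (α * T) ^ 2 > 2) :
    (∀ j : ℕ, 1 ≤ j → j ≤ N - 1 → ∀ β : ℝ, 0 ≤ β →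
      (2 * β * (1 - Real.cos (2 * Real.pi * j / N)) + γ) ^ 2 * (γ / T + 2 * α ^ 2)
        - (γ / T) ^ 2 * (1 + Real.cos (2 * Real.pi * j / N)) > 0) ∧
    (∀ β : ℝ, 0 ≤ β →
      ∀ A : Matrix (Fin N) (Fin N) ℝ,
        (∀ n m : Fin N, A n m = if m = n then -1 else if m = n + 1 then 1 else 0) →
      ∀ B : Matrix (Fin N ⊕ Fin N) (Fin N ⊕ Fin N) ℝ,
        B = Matrix.fromBlocks 0 A ((γ / T) • 1 - (α ^ 2) • Aᵀ) (-β • (Aᵀ * A) - γ • 1) →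
      ∀ lam : ℂ, lam ∈ spectrum ℂ (B.map (algebraMap ℝ ℂ)) → lam ≠ 0 → lam.re < 0) := by
  constructor
  · intro j hj1 hj2 β hβ
    set c := Real.cos (2 * Real.pi * j / N) with hc
    have hc1 : c ≤ 1 := Real.cos_le_one _
    have hc2 : -1 ≤ c := Real.neg_one_le_cos _
    have hT2 : (0:ℝ) < T^2 := by positivity
    have hK : 2 / T^2 < γ / T + 2 * α ^ 2 := by
      rw [div_lt_iff₀ hT2]
      have e1 : γ / T * T = γ := div_mul_cancel₀ γ hT.ne'
      nlinarith
    have hK0 : 0 < γ / T + 2 * α ^ 2 := lt_trans (by positivity) hK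
    have hp : γ ≤ 2 * β * (1 - c) + γ := by nlinarith
    have h1 : γ^2 * (2/T^2) < γ^2 * (γ / T + 2 * α ^ 2) :=
      mul_lt_mul_of_pos_left hK (by positivity)
    have h2 : γ^2 * (2/T^2) = 2*(γ/T)^2 := by field_simp
    have h3 : γ^2 ≤ (2 * β * (1 - c) + γ)^2 := by nlinarith
    have h4 : γ^2 * (γ / T + 2 * α ^ 2) ≤ (2 * β * (1 - c) + γ)^2 * (γ / T + 2 * α ^ 2) :=
      mul_le_mul_of_nonneg_right h3 hK0.le
    have h5 : (γ/T)^2 * (1+c) ≤ 2*(γ/T)^2 := by nlinarith [sq_nonneg (γ/T)]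
    linarith
  · intro β hβ A hA B hB lam hspec hlam
    subst hB
    rw [mapB] at hspec
    obtain ⟨v, hv0, hveq⟩ := eigvec _ lam hspec
    set x := fun i => v (Sum.inl i) with hx
    set y := fun i => v (Sum.inr i) with hy'
    have hvs : v = Sum.elim x y := by funext i; cases i <;> rfl
    rw [hvs, Matrix.fromBlocks_mulVec] at hveq
    have e1 : (A.map f) *ᵥ y = lam • x := by
      funext i
      have h := congrFun hveq (Sum.inl i)
      simpa [Matrix.zero_mulVec] using h
    have e2 : (((γ/T : ℝ):ℂ) • 1 - ((α^2 : ℝ):ℂ) • (A.map f)ᵀ) *ᵥ x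
        + ((-(β:ℂ)) • ((A.map f)ᵀ * (A.map f)) - (γ:ℂ) • 1) *ᵥ y = lam • y := by
      funext i
      have h := congrFun hveq (Sum.inr i)
      simpa using h
    have hyne : y ≠ 0 := by
      intro h0
      apply hv0
      have hx0 : x = 0 := by
        have hz : lam • x = 0 := by rw [← e1, h0, Matrix.mulVec_zero]
        rcases smul_eq_zero.1 hz with h | h
        · exact absurd h hlam
        · exact h
      rw [hvs, h0, hx0]
      funext i; cases i <;> rfl
    exact core N α γ T β hα hγ hT hβ hcond A hA lam hlam x y hyne e1 e2
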